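/- For open sets O, V in X and n ∈ ℕ, the relation (n+1)O ≺ nV holds if and only if for every closed F ⊆ O there exist open sets U^(i)_j (j = 1,...,J_i, i = 1,...,n+1) and group elements s^(i)_j ∈ G such that: (1) F ⊆ ⋃_j U^(i)_j for each i; (2) s^(i)_j U^(i)_j ⊆ V for all i, j; and (3) the family {s^(i)_j U^(i)_j} has chromatic number at most n (i.e., it can be partitioned into at most n subfamilies each consisting of pairwise disjoint sets). -/

import Mathlib

open scoped Pointwise NNReal ENNReal

variable {X : Type*} [TopologicalSpace X] {G : Type*} [Group G] [MulAction G X]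

/-- The open support of a continuous `ℝ≥0`-valued function. -/
def osupp (f : C(X, ℝ≥0)) : Set X := {x | f x ≠ 0}

/-- Dynamical subequivalence `A ≼ B` for two finite tuples (lists) of subsets of `X`. -/
def SetSubeq (G : Type*) [Group G] [MulAction G X] (A B : List (Set X)) : Prop :=
  ∀ F : Fin A.length → Set X,
    (∀ i, IsClosed (F i) ∧ F i ⊆ A.get i) →
    ∃ (J : Fin A.length → ℕ)
      (U : (i : Fin A.length) → Fin (J i) → Set X)
      (s : (i : Fin A.length) → Fin (J i) → G)
      (k : (i : Fin A.length) → Fin (J i) → Fin B.length),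
      (∀ i j, IsOpen (U i j)) ∧
      (∀ i, F i ⊆ ⋃ j, U i j) ∧
      (∀ i j, (s i j) • U i j ⊆ B.get (k i j)) ∧
      (∀ (p q : Σ i : Fin A.length, Fin (J i)), p ≠ q → k p.1 p.2 = k q.1 q.2 →
        Disjoint ((s p.1 p.2) • U p.1 p.2) ((s q.1 q.2) • U q.1 q.2))

/-- Dynamical subequivalence `a ≼ b` for tuples of nonnegative continuous functions. -/
def DynSubeq (G : Type*) [Group G] [MulAction G X] (a b : List C(X, ℝ≥0)) : Prop :=
  SetSubeq G (a.map osupp) (b.map osupp)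

/-- The entrywise cut-down `(f - ε)₊`. -/
noncomputable def cutFun (f : C(X, ℝ≥0)) (ε : ℝ≥0) : C(X, ℝ≥0) :=
  ⟨fun x => f x - ε, f.continuous.sub continuous_const⟩

noncomputable def cutList (a : List C(X, ℝ≥0)) (ε : ℝ≥0) : List C(X, ℝ≥0) := a.map (cutFun · ε)

/-- Membership in the algebra of sets generated by the open sets of `X`. -/
def InAlg (X : Type*) [TopologicalSpace X] (s : Set X) : Prop :=
  s ∈ MeasureTheory.generateSetAlgebra {t : Set X | IsOpen t}

/-- A `G`-invariant regular premeasure on the algebra generated by the open sets. -/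
structure InvRegPremeasure (X : Type*) [TopologicalSpace X] (G : Type*) [Group G]
    [MulAction G X] where
  m : Set X → ℝ≥0∞
  junk : ∀ s : Set X, ¬ InAlg X s → m s = 0
  empty' : m ∅ = 0
  countably_additive : ∀ A : ℕ → Set X, (∀ n, InAlg X (A n)) →
    Pairwise (Function.onFun Disjoint A) → InAlg X (⋃ n, A n) →
    m (⋃ n, A n) = ∑' n, m (A n)
  invariant : ∀ (g : G) (s : Set X), InAlg X s → m (g • s) = m s
  inner_regular : ∀ s : Set X, InAlg X s →
    m s = ⨆ (F : Set X) (_ : IsCompact F ∧ F ⊆ s), m F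
  outer_regular : ∀ s : Set X, InAlg X s →
    m s = ⨅ (O : Set X) (_ : IsOpen O ∧ s ⊆ O), m O

/-- A state on the generalized type semigroup `W(X, G)`, described at the level of
`K(X, G)`: a function on tuples which is monotone for `≼`, additive for concatenation,
and vanishes on the empty tuple. -/
structure DynState (X : Type*) [TopologicalSpace X] (G : Type*) [Group G]
    [MulAction G X] where
  toFun : List C(X, ℝ≥0) → ℝ≥0∞
  mono : ∀ a b, DynSubeq G a b → toFun a ≤ toFun b
  additive : ∀ a b, toFun (a ++ b) = toFun a + toFun b
  zero' : toFun [] = 0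

/-- Lower semicontinuity of a state. -/
def DynState.LSC (D : DynState X G) : Prop :=
  ∀ a, D.toFun a = ⨆ (ε : ℝ≥0) (_ : 0 < ε), D.toFun (cutList a ε)

/-- **Remark 1.5.** The relation `(n+1)O ≺ nV` holds iff for every closed `F ⊆ O` there are
open sets `U⁽ⁱ⁾ⱼ` and group elements `s⁽ⁱ⁾ⱼ` such that each family `{U⁽ⁱ⁾ⱼ}ⱼ` covers `F`,
all translates `s⁽ⁱ⁾ⱼ U⁽ⁱ⁾ⱼ` are contained in `V`, and the family of translates has
chromatic number at most `n`. -/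
theorem replicate_subeq_iff_chromatic {X : Type*} [TopologicalSpace X] [CompactSpace X]
    [T2Space X] {G : Type*} [Group G] [MulAction G X]
    (hG : ∀ g : G, Continuous fun x : X => g • x)
    (O V : Set X) (hO : IsOpen O) (hV : IsOpen V) (n : ℕ) :
    SetSubeq G (List.replicate (n + 1) O) (List.replicate n V) ↔
      ∀ F : Set X, IsClosed F → F ⊆ O →
        ∃ (J : Fin (n + 1) → ℕ) (U : (i : Fin (n + 1)) → Fin (J i) → Set X)
          (s : (i : Fin (n + 1)) → Fin (J i) → G),
          (∀ i j, IsOpen (U i j)) ∧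
          (∀ i, F ⊆ ⋃ j, U i j) ∧
          (∀ i j, s i j • U i j ⊆ V) ∧
          (∃ c : (Σ i : Fin (n + 1), Fin (J i)) → Fin n,
            ∀ p q : Σ i : Fin (n + 1), Fin (J i), p ≠ q → c p = c q →
              Disjoint (s p.1 p.2 • U p.1 p.2) (s q.1 q.2 • U q.1 q.2)) := by
  have hL1 : (List.replicate (n + 1) O).length = n + 1 := List.length_replicate
  have hL2 : (List.replicate n V).length = n := List.length_replicate
  constructor
  · intro h F hFc hFO
    obtain ⟨J, U, s, k, hUo, hFU, hsU, hdisj⟩ := h (fun _ => F)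
      (fun i => ⟨hFc, by simpa using hFO⟩)
    refine ⟨fun i => J (Fin.cast hL1.symm i), fun i j => U (Fin.cast hL1.symm i) j,
      fun i j => s (Fin.cast hL1.symm i) j, fun i j => hUo _ _, fun i => hFU _,
      fun i j => by simpa using hsU (Fin.cast hL1.symm i) j,
      ⟨fun p => Fin.cast hL2 (k (Fin.cast hL1.symm p.1) p.2), ?_⟩⟩
    intro p q hpq hc
    refine hdisj ⟨Fin.cast hL1.symm p.1, p.2⟩ ⟨Fin.cast hL1.symm q.1, q.2⟩ ?_ ?_
    · intro he
      apply hpq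
      obtain ⟨h1, h2⟩ := Sigma.mk.inj_iff.mp he
      have h1' : p.1 = q.1 := Fin.ext (by simpa using congrArg Fin.val h1)
      exact Sigma.ext h1' h2
    · exact Fin.ext (by simpa using congrArg Fin.val hc)
  · intro h F hF
    have hFbigc : IsClosed (⋃ i, F i) := isClosed_iUnion_of_finite fun i => (hF i).1
    have hFbigO : (⋃ i, F i) ⊆ O := Set.iUnion_subset fun i => by
      simpa using (hF i).2
    obtain ⟨J, U, s, hUo, hFU, hsV, c, hc⟩ := h _ hFbigc hFbigO
    refine ⟨fun i => J (Fin.cast hL1 i), fun i j => U (Fin.cast hL1 i) j,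
      fun i j => s (Fin.cast hL1 i) j,
      fun i j => Fin.cast hL2.symm (c ⟨Fin.cast hL1 i, j⟩),
      fun i j => hUo _ _,
      fun i => (Set.subset_iUnion F i).trans (hFU _),
      fun i j => by simpa using hsV (Fin.cast hL1 i) j, ?_⟩
    intro p q hpq hk
    refine hc ⟨Fin.cast hL1 p.1, p.2⟩ ⟨Fin.cast hL1 q.1, q.2⟩ ?_ ?_
    · intro he
      apply hpq
      obtain ⟨h1, h2⟩ := Sigma.mk.inj_iff.mp he
      have h1' : p.1 = q.1 := Fin.ext (by simpa using congrArg Fin.val h1)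
      exact Sigma.ext h1' h2
    · exact Fin.ext (by simpa using congrArg Fin.val hk)
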